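/- Let n ≥ 2, let c be a coloring of n strands, set t = t_{c_n}, and let c⁺ be the coloring of n+1 strands with c⁺_i = c_i for i ≤ n and c⁺_{n+1} = c_n. Suppose A is an (n−1)×(n−1) matrix over Λ_μ and v is a row vector of length n−1 over Λ_μ such that (A, v) satisfies the boundary relation for c, and let M = [[A,0],[v,1]]. Let G^{+1} be the n×n matrix equal to the identity except in its last 2×2 diagonal block, which equals [[1, t],[0, −t]], and let G^{−1} be its inverse (identity except last 2×2 block [[1, 1],[0, −t^{−1}]]). Then for every m ∈ Λ_μ and every ε ∈ {+1, −1}: F(c⁺, t^{−ε}·m, M·G^{ε}) = F(c, m, A) in Q. (This is the invariance of the paper's invariant f under the second colored Markov move, Proposition 3.2(2), in matrix form: here M·G^{ε} is the reduced colored Gassner matrix of σ_n^{ε} i_{c_n}(α) when A is the reduced colored Gassner matrix of a (c,c)-braid α with monomial ⟨α⟩ = m.) -/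

import Mathlib

noncomputable section

open scoped BigOperators

/-- The multivariable Laurent polynomial ring `Λ_μ = ℤ[t₁^{±1},…,t_μ^{±1}]`,
realized as the group ℤ-algebra of `ℤ^μ`. -/
abbrev Lau (μ : ℕ) : Type := AddMonoidAlgebra ℤ (Fin μ →₀ ℤ)

instance (μ : ℕ) : IsDomain (Lau μ) := NoZeroDivisors.to_isDomain _

/-- The distinguished unit `t_i` of `Λ_μ`. -/
def tU {μ : ℕ} (i : Fin μ) : (Lau μ)ˣ where
  val := AddMonoidAlgebra.single (Finsupp.single i 1) 1
  inv := AddMonoidAlgebra.single (Finsupp.single i (-1)) 1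
  val_inv := by
    rw [AddMonoidAlgebra.single_mul_single, ← Finsupp.single_add]
    norm_num; rfl
  inv_val := by
    rw [AddMonoidAlgebra.single_mul_single, ← Finsupp.single_add]
    norm_num; rfl

/-- `T^c_i = t_{c_1} ⋯ t_{c_i}` (product of the first `i` values of the coloring,
zero-indexed: product over indices `k ≤ i`), as a unit of `Λ_μ`. -/
def TU {μ n : ℕ} (c : Fin n → Fin μ) (i : Fin n) : (Lau μ)ˣ :=
  ∏ k ∈ Finset.Iic i, tU (c k)

/-- The `n×n` matrix `[[A,0],[v,1]]` built from an `(n−1)×(n−1)` matrix `A`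
and a row vector `v` of length `n−1` (here `n = l+2`): the upper-left block is `A`,
the last column is `(0,…,0,1)ᵀ` and the last row begins with `v`. -/
def aug {μ l : ℕ} (A : Matrix (Fin (l+1)) (Fin (l+1)) (Lau μ)) (v : Fin (l+1) → Lau μ) :
    Matrix (Fin (l+2)) (Fin (l+2)) (Lau μ) := fun i j =>
  if hi : (i : ℕ) < l + 1 then
    if hj : (j : ℕ) < l + 1 then A ⟨i, hi⟩ ⟨j, hj⟩ else 0
  else
    if hj : (j : ℕ) < l + 1 then v ⟨j, hj⟩ else 1

/-- The pair `(A, v)` satisfies the boundary relation for the coloring `c`: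
for every column `j`, `∑_{i=1}^{n−1} (T^c_i − 1)(A − I)_{ij} = −(T^c_n − 1) v_j`. -/
def BoundaryRel {μ l : ℕ} (c : Fin (l+2) → Fin μ) (A : Matrix (Fin (l+1)) (Fin (l+1)) (Lau μ))
    (v : Fin (l+1) → Lau μ) : Prop :=
  ∀ j : Fin (l+1), ∑ i : Fin (l+1),
      ((TU c i.castSucc : Lau μ) - 1) * (A - 1) i j
    = -((TU c (Fin.last (l+1)) : Lau μ) - 1) * v j

/-- The `(l+2)×(l+2)` matrix equal to the identity except in its last `2×2`
diagonal block, which is `[[a,b],[c,d]]`. -/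
def last2Block {μ : ℕ} (l : ℕ) (a b c d : Lau μ) :
    Matrix (Fin (l+2)) (Fin (l+2)) (Lau μ) := fun i j =>
  if (i : ℕ) = l ∧ (j : ℕ) = l then a
  else if (i : ℕ) = l ∧ (j : ℕ) = l + 1 then b
  else if (i : ℕ) = l + 1 ∧ (j : ℕ) = l then c
  else if (i : ℕ) = l + 1 ∧ (j : ℕ) = l + 1 then d
  else if i = j then 1 else 0

/-- The ring endomorphism `g` of `Λ_μ` sending each `t_i` to `t_i²` (the ℤ-linear
extension of the exponent-doubling endomorphism of `ℤ^μ`). -/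
def gmap (μ : ℕ) : Lau μ →+* Lau μ :=
  AddMonoidAlgebra.mapDomainRingHom ℤ ((2 : ℕ) • AddMonoidHom.id (Fin μ →₀ ℤ))

/-- The quantity `F(c, m, A) = (−1)^{n+1} · m · g(det(A − I)) / (T^c_n − (T^c_n)^{−1})`
in the field of fractions `Q` of `Λ_μ`, for a coloring `c` of `n = k+1` strands,
a monomial `m` and a `k×k` matrix `A`. -/
def Fdef {μ k : ℕ} (c : Fin (k+1) → Fin μ) (m : Lau μ)
    (A : Matrix (Fin k) (Fin k) (Lau μ)) : FractionRing (Lau μ) :=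
  (-1) ^ (k + 2) * algebraMap (Lau μ) (FractionRing (Lau μ)) (m * gmap μ ((A - 1).det)) /
    (algebraMap (Lau μ) (FractionRing (Lau μ)) (TU c (Fin.last k) : Lau μ)
      - algebraMap (Lau μ) (FractionRing (Lau μ)) (((TU c (Fin.last k))⁻¹ : (Lau μ)ˣ) : Lau μ))

variable {μ l : ℕ}

variable {μ l : ℕ}

lemma mul_last2Block (A : Matrix (Fin (l+1)) (Fin (l+1)) (Lau μ)) (v : Fin (l+1) → Lau μ)
    (b d : Lau μ) (i j : Fin (l+2)) :
    (aug A v * last2Block l 1 b 0 d) i j =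
      if (j : ℕ) < l + 1 then aug A v i j
      else aug A v i ((Fin.last l).castSucc) * b + aug A v i j * d := by
  rw [Matrix.mul_apply]
  by_cases hj : (j : ℕ) < l + 1
  · have hG : ∀ k, last2Block l 1 b 0 d k j = if k = j then 1 else 0 := by
      intro k
      simp only [last2Block, Fin.ext_iff]
      split_ifs <;> first | rfl | (exfalso; omega)
    simp [hG, Finset.sum_ite_eq', mul_ite, hj]
  · have hj' : (j : ℕ) = l + 1 := by omega
    have hG : ∀ k, last2Block l 1 b 0 d k j =
        (if k = (Fin.last l).castSucc then b else 0) + (if k = j then d else 0) := by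
      intro k
      simp only [last2Block, Fin.ext_iff, Fin.coe_castSucc, Fin.val_last]
      split_ifs <;> first | rfl | (exfalso; omega) | simp
    simp only [hG, mul_add, Finset.sum_add_distrib, mul_ite, mul_zero,
      Finset.sum_ite_eq', Finset.mem_univ, if_true, hj]
    simp [hj]

variable (A : Matrix (Fin (l+1)) (Fin (l+1)) (Lau μ)) (v : Fin (l+1) → Lau μ)

lemma aug_cc (i0 j0 : Fin (l+1)) : aug A v i0.castSucc j0.castSucc = A i0 j0 := by
  simp [aug, Fin.is_le]

lemma aug_cl (i0 : Fin (l+1)) : aug A v i0.castSucc (Fin.last (l+1)) = 0 := by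
  simp [aug, Fin.is_le]

lemma aug_lc (j0 : Fin (l+1)) : aug A v (Fin.last (l+1)) j0.castSucc = v j0 := by
  simp [aug, Fin.is_le]

lemma aug_ll : aug A v (Fin.last (l+1)) (Fin.last (l+1)) = 1 := by
  simp [aug]

lemma key (c : Fin (l+2) → Fin μ) (hb : BoundaryRel c A v) (b d : Lau μ) :
    ((TU c (Fin.last (l+1)) : Lau μ) - 1) * (aug A v * last2Block l 1 b 0 d - 1).det
    = (((TU c (Fin.last (l+1)) : Lau μ) - 1) * (d - 1)
        + b * ((TU c ((Fin.last l).castSucc) : Lau μ) - 1)) * (A - 1).det := by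
  set cor : Lau μ := ((TU c (Fin.last (l+1)) : Lau μ) - 1) * (d - 1)
        + b * ((TU c ((Fin.last l).castSucc) : Lau μ) - 1) with hcor
  set Dm : Matrix (Fin (l+2)) (Fin (l+2)) (Lau μ) :=
    aug A v * last2Block l 1 b 0 d - 1 with hDmdef
  have hDtop : ∀ (i0 j0 : Fin (l+1)), Dm i0.castSucc j0.castSucc = (A - 1) i0 j0 := by
    intro i0 j0
    simp [hDmdef, Matrix.sub_apply, mul_last2Block, Matrix.one_apply, aug_cc,
      Fin.castSucc_inj, Fin.is_le]
  have hDtopl : ∀ i0 : Fin (l+1), Dm i0.castSucc (Fin.last (l+1)) = A i0 (Fin.last l) * b := by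
    intro i0
    have h1 : ¬ ((Fin.last (l+1) : Fin (l+2)) : ℕ) < l + 1 := by simp
    have h2 : i0.castSucc ≠ Fin.last (l+1) := (Fin.castSucc_lt_last i0).ne
    simp [hDmdef, Matrix.sub_apply, mul_last2Block, Matrix.one_apply, h1, h2, aug_cc, aug_cl]
  have hDbot : ∀ j0 : Fin (l+1), Dm (Fin.last (l+1)) j0.castSucc = v j0 := by
    intro j0
    have h2 : (Fin.last (l+1) : Fin (l+2)) ≠ j0.castSucc := (Fin.castSucc_lt_last j0).ne'
    simp [hDmdef, Matrix.sub_apply, mul_last2Block, Matrix.one_apply, h2, aug_lc, Fin.is_le]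
  have hDbotl : Dm (Fin.last (l+1)) (Fin.last (l+1)) = v (Fin.last l) * b + d - 1 := by
    have h1 : ¬ ((Fin.last (l+1) : Fin (l+2)) : ℕ) < l + 1 := by simp
    simp [hDmdef, Matrix.sub_apply, mul_last2Block, Matrix.one_apply, h1, aug_lc, aug_ll]
    try ring
  set w : Fin (l+2) → Lau μ := fun k => (TU c k : Lau μ) - 1 with hw
  have hupdate := Matrix.det_updateRow_sum Dm (Fin.last (l+1)) w
  set e : Fin (l+1) ⊕ Fin 1 ≃ Fin (l+2) := finSumFinEquiv with he
  have hil : ∀ i0 : Fin (l+1), (e (Sum.inl i0) : Fin (l+2)) = i0.castSucc :=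
    fun _ => rfl
  have hir : (e (Sum.inr (0 : Fin 1)) : Fin (l+2)) = Fin.last (l+1) := by
    simp [he, finSumFinEquiv, Fin.ext_iff]
  have hrow : ∀ j : Fin (l+2), (∑ k, w k • Dm k) j = ∑ k, w k * Dm k j := by
    intro j; simp [Finset.sum_apply]
  have hblock : (Dm.updateRow (Fin.last (l+1)) (∑ k, w k • Dm k)).submatrix e e
      = Matrix.fromBlocks (A - 1) (Matrix.of fun i0 (_ : Fin 1) => A i0 (Fin.last l) * b) 0
          (Matrix.of fun _ _ => cor) := by
    refine Matrix.ext fun i j => ?_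
    cases i with
    | inl i0 =>
      have hne : (i0.castSucc : Fin (l+2)) ≠ Fin.last (l+1) :=
        (Fin.castSucc_lt_last i0).ne
      cases j with
      | inl j0 =>
        simp only [Matrix.submatrix_apply, Matrix.updateRow_ne hne, hil, hDtop,
          Matrix.fromBlocks_apply₁₁]
      | inr j1 =>
        have hj1 : j1 = 0 := Subsingleton.elim _ _
        subst hj1
        simp only [Matrix.submatrix_apply, Matrix.updateRow_ne hne, hil, hir, hDtopl,
          Matrix.fromBlocks_apply₁₂, Matrix.of_apply]
    | inr i1 =>
      have hi1 : i1 = 0 := Subsingleton.elim _ _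
      subst hi1
      have heq : (e (Sum.inr (0:Fin 1)) : Fin (l+2)) = Fin.last (l+1) := hir
      cases j with
      | inl j0 =>
        simp only [Matrix.submatrix_apply, heq, Matrix.updateRow_self, hrow,
          Matrix.fromBlocks_apply₂₁, Matrix.zero_apply, hil]
        rw [Fin.sum_univ_castSucc]
        simp only [hDtop, hDbot]
        rw [hb j0]
        simp [hw]
        ring
      | inr j1 =>
        have hj1 : j1 = 0 := Subsingleton.elim _ _
        subst hj1
        simp only [Matrix.submatrix_apply, heq, Matrix.updateRow_self, hrow,
          Matrix.fromBlocks_apply₂₂, Matrix.of_apply]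
        rw [Fin.sum_univ_castSucc]
        have hsplit : ∀ i0 : Fin (l+1), w i0.castSucc * Dm i0.castSucc (Fin.last (l+1))
            = (w i0.castSucc * (A - 1) i0 (Fin.last l)) * b
              + (if i0 = Fin.last l then w i0.castSucc else 0) * b := by
          intro i0; rw [hDtopl]
          by_cases h : i0 = Fin.last l
          · subst h; simp [Matrix.sub_apply, Matrix.one_apply]; ring
          · simp [Matrix.sub_apply, Matrix.one_apply, h]; ring
        rw [Finset.sum_congr rfl (fun i0 _ => hsplit i0), Finset.sum_add_distrib,
          ← Finset.sum_mul, ← Finset.sum_mul, hb (Fin.last l), Finset.sum_ite_eq',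
          hDbotl]
        simp [hw, hcor]
        ring
  have h2 : (Dm.updateRow (Fin.last (l+1)) (∑ k, w k • Dm k)).det = (A - 1).det * cor := by
    rw [← Matrix.det_submatrix_equiv_self e, hblock,
      Matrix.det_fromBlocks_zero₂₁, Matrix.det_fin_one, Matrix.of_apply]
  rw [hupdate] at h2
  rw [smul_eq_mul] at h2
  calc ((TU c (Fin.last (l+1)) : Lau μ) - 1) * Dm.det = w (Fin.last (l+1)) * Dm.det := rfl
    _ = (A - 1).det * cor := h2
    _ = cor * (A - 1).det := mul_comm _ _

lemma prod_single {ι : Type*} (s : Finset ι) (f : ι → (Fin μ →₀ ℤ)) :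
    (∏ k ∈ s, (AddMonoidAlgebra.single (f k) 1 : Lau μ)) =
      AddMonoidAlgebra.single (∑ k ∈ s, f k) 1 := by
  classical
  induction s using Finset.induction_on with
  | empty => simp [AddMonoidAlgebra.one_def]
  | insert _ _ h ih => rw [Finset.prod_insert h, Finset.sum_insert h, ih,
      AddMonoidAlgebra.single_mul_single, one_mul]

lemma TU_val {n : ℕ} (c : Fin n → Fin μ) (i : Fin n) :
    ((TU c i : (Lau μ)ˣ) : Lau μ)
      = AddMonoidAlgebra.single (∑ k ∈ Finset.Iic i, Finsupp.single (c k) (1:ℤ)) 1 := by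
  rw [TU]
  rw [show ((↑(∏ k ∈ Finset.Iic i, tU (c k)) : Lau μ))
      = ∏ k ∈ Finset.Iic i, ((tU (c k) : Lau μ)) from
    map_prod (Units.coeHom (Lau μ)) _ _]
  exact prod_single _ _

lemma TU_inv_val {n : ℕ} (c : Fin n → Fin μ) (i : Fin n) :
    (((TU c i)⁻¹ : (Lau μ)ˣ) : Lau μ)
      = AddMonoidAlgebra.single (-∑ k ∈ Finset.Iic i, Finsupp.single (c k) (1:ℤ)) 1 := by
  rw [TU, ← Finset.prod_inv_distrib]
  rw [show ((↑(∏ k ∈ Finset.Iic i, (tU (c k))⁻¹) : Lau μ))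
      = ∏ k ∈ Finset.Iic i, (((tU (c k))⁻¹ : (Lau μ)ˣ) : Lau μ) from
    map_prod (Units.coeHom (Lau μ)) _ _]
  have : ∀ k : Fin n, (((tU (c k))⁻¹ : (Lau μ)ˣ) : Lau μ)
      = AddMonoidAlgebra.single (Finsupp.single (c k) (-1:ℤ)) 1 := fun _ => rfl
  rw [Finset.prod_congr rfl (fun k _ => this k), prod_single]
  congr 1
  rw [← Finset.sum_neg_distrib]
  exact Finset.sum_congr rfl (fun k _ => by rw [Finsupp.single_neg])

def mass (μ : ℕ) : (Fin μ →₀ ℤ) →+ ℤ := Finsupp.liftAddHom (fun _ => AddMonoidHom.id ℤ)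

lemma mass_single (i : Fin μ) (n : ℤ) : mass μ (Finsupp.single i n) = n := by
  simp [mass, Finsupp.liftAddHom_apply_single]

lemma single_sub_single_ne (a b : Fin μ →₀ ℤ) (h : a ≠ b) :
    (AddMonoidAlgebra.single a (1:ℤ) : Lau μ) - AddMonoidAlgebra.single b 1 ≠ 0 := by
  intro hE
  rw [sub_eq_zero] at hE
  rcases AddMonoidAlgebra.single_inj.mp hE with ⟨h1,_⟩|⟨h1,_⟩
  · exact h h1
  · norm_num at h1

lemma mass_S {n : ℕ} (c : Fin n → Fin μ) (i : Fin n) :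
    mass μ (∑ k ∈ Finset.Iic i, Finsupp.single (c k) (1:ℤ)) = (Finset.Iic i).card := by
  rw [map_sum]
  simp [mass_single]

lemma S_ne_zero {n : ℕ} (c : Fin n → Fin μ) (i : Fin n) :
    (∑ k ∈ Finset.Iic i, Finsupp.single (c k) (1:ℤ)) ≠ 0 := by
  intro h
  have := mass_S c i
  rw [h] at this
  have hcard : 0 < (Finset.Iic i).card :=
    Finset.card_pos.mpr ⟨i, Finset.mem_Iic.mpr le_rfl⟩
  simp at this
  omega

lemma TU_sub_inv_ne {n : ℕ} (c : Fin n → Fin μ) (i : Fin n) :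
    ((TU c i : Lau μ) - (((TU c i)⁻¹ : (Lau μ)ˣ) : Lau μ)) ≠ 0 := by
  rw [TU_val, TU_inv_val]
  apply single_sub_single_ne
  intro h
  have h2 := congrArg (mass μ) h
  rw [mass_S, map_neg, mass_S] at h2
  have hcard : 0 < (Finset.Iic i).card :=
    Finset.card_pos.mpr ⟨i, Finset.mem_Iic.mpr le_rfl⟩
  omega

lemma TU_sq_sub_one_ne {n : ℕ} (c : Fin n → Fin μ) (i : Fin n) :
    (TU c i : Lau μ) * (TU c i : Lau μ) - 1 ≠ 0 := by
  rw [TU_val, AddMonoidAlgebra.single_mul_single, one_mul,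
    show (1 : Lau μ) = AddMonoidAlgebra.single 0 1 from rfl]
  apply single_sub_single_ne
  intro h
  have h2 := congrArg (mass μ) h
  rw [map_add, mass_S, map_zero] at h2
  have hcard : 0 < (Finset.Iic i).card :=
    Finset.card_pos.mpr ⟨i, Finset.mem_Iic.mpr le_rfl⟩
  omega

lemma gmap_single (a : Fin μ →₀ ℤ) (r : ℤ) :
    gmap μ (AddMonoidAlgebra.single a r) = AddMonoidAlgebra.single (a + a) r := by
  simp [gmap, Finsupp.mapDomain_single, two_smul]

lemma gmap_TU {n : ℕ} (c : Fin n → Fin μ) (i : Fin n) :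
    gmap μ (TU c i : Lau μ) = (TU c i : Lau μ) * (TU c i : Lau μ) := by
  rw [TU_val, gmap_single, AddMonoidAlgebra.single_mul_single, one_mul]

lemma gmap_TU_inv {n : ℕ} (c : Fin n → Fin μ) (i : Fin n) :
    gmap μ (((TU c i)⁻¹ : (Lau μ)ˣ) : Lau μ)
      = (((TU c i)⁻¹ : (Lau μ)ˣ) : Lau μ) * (((TU c i)⁻¹ : (Lau μ)ˣ) : Lau μ) := by
  rw [TU_inv_val, gmap_single, AddMonoidAlgebra.single_mul_single, one_mul]

lemma gmap_tU (i : Fin μ) :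
    gmap μ (tU i : Lau μ) = (tU i : Lau μ) * (tU i : Lau μ) := by
  rw [show ((tU i : Lau μ)) = AddMonoidAlgebra.single (Finsupp.single i 1) (1:ℤ) from rfl,
    gmap_single, AddMonoidAlgebra.single_mul_single, one_mul]

lemma gmap_tU_inv (i : Fin μ) :
    gmap μ (((tU i)⁻¹ : (Lau μ)ˣ) : Lau μ)
      = (((tU i)⁻¹ : (Lau μ)ˣ) : Lau μ) * (((tU i)⁻¹ : (Lau μ)ˣ) : Lau μ) := by
  rw [show ((((tU i)⁻¹ : (Lau μ)ˣ) : Lau μ))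
      = AddMonoidAlgebra.single (Finsupp.single i (-1)) (1:ℤ) from rfl,
    gmap_single, AddMonoidAlgebra.single_mul_single, one_mul]

lemma TU_last_eq (c : Fin (l+2) → Fin μ) :
    TU c (Fin.last (l+1)) = TU c ((Fin.last l).castSucc) * tU (c (Fin.last (l+1))) := by
  rw [TU, TU]
  have hset : Finset.Iic (Fin.last (l+1)) =
      insert (Fin.last (l+1)) (Finset.Iic ((Fin.last l).castSucc)) := by
    ext k
    have hk := k.isLt
    simp [Finset.mem_Iic, Fin.le_def, Fin.ext_iff]
    omega
  have hnotin : (Fin.last (l+1)) ∉ Finset.Iic ((Fin.last l).castSucc) := by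
    simp [Finset.mem_Iic, Fin.le_def]
  rw [hset, Finset.prod_insert hnotin, mul_comm]

lemma Iic_last_univ {n : ℕ} : Finset.Iic (Fin.last n) = Finset.univ := by
  ext k; simp [Finset.mem_Iic, Fin.le_last]

lemma TU_snoc (c : Fin (l+2) → Fin μ) :
    TU (Fin.snoc c (c (Fin.last (l+1)))) (Fin.last (l+2))
      = TU c (Fin.last (l+1)) * tU (c (Fin.last (l+1))) := by
  rw [TU, TU, Iic_last_univ, Iic_last_univ, Fin.prod_univ_castSucc]
  congr 1
  · exact Finset.prod_congr rfl (fun k _ => by rw [Fin.snoc_castSucc])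
  · rw [Fin.snoc_last]

lemma final1 {K : Type*} [Field K] (x x' y y' z z' δ β M : K) (n : ℕ)
    (hx : x * x' = 1) (hy : y * y' = 1) (hz : z = y * x) (hz' : z' = y' * x')
    (hyy : y * y - 1 ≠ 0) (hd1 : z - z' ≠ 0) (hd2 : y - y' ≠ 0)
    (hkey : (y * y - 1) * δ = (1 - x * x * (y * y)) * β) :
    (-1) ^ (n + 2 + 2) * (x' * M * δ) / (z - z') = (-1) ^ (n + 1 + 2) * (M * β) / (y - y') := by
  have hx' : x' = x⁻¹ := eq_inv_of_mul_eq_one_left (by linear_combination hx)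
  have hy' : y' = y⁻¹ := eq_inv_of_mul_eq_one_left (by linear_combination hy)
  have hx0 : x ≠ 0 := left_ne_zero_of_mul_eq_one hx
  have hy0 : y ≠ 0 := left_ne_zero_of_mul_eq_one hy
  have hδ : δ = (1 - x * x * (y * y)) * β / (y * y - 1) := by
    rw [eq_div_iff hyy]; linear_combination hkey
  subst hz hz' hx' hy' hδ
  rw [div_eq_div_iff hd1 hd2]
  have hyy2 : y ^ 2 - 1 ≠ 0 := by intro h; apply hyy; linear_combination h
  field_simp
  ring

lemma final2 {K : Type*} [Field K] (x x' y y' z z' δ β M : K) (n : ℕ)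
    (hx : x * x' = 1) (hy : y * y' = 1) (hz : z = y * x) (hz' : z' = y' * x')
    (hyy : y * y - 1 ≠ 0) (hd1 : z - z' ≠ 0) (hd2 : y - y' ≠ 0)
    (hkey : (y * y - 1) * δ = (x' * x' - y * y) * β) :
    (-1) ^ (n + 2 + 2) * (x * M * δ) / (z - z') = (-1) ^ (n + 1 + 2) * (M * β) / (y - y') := by
  have hx' : x' = x⁻¹ := eq_inv_of_mul_eq_one_left (by linear_combination hx)
  have hy' : y' = y⁻¹ := eq_inv_of_mul_eq_one_left (by linear_combination hy)
  have hx0 : x ≠ 0 := left_ne_zero_of_mul_eq_one hx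
  have hy0 : y ≠ 0 := left_ne_zero_of_mul_eq_one hy
  subst hx'
  have hδ : δ = (x⁻¹ * x⁻¹ - y * y) * β / (y * y - 1) := by
    rw [eq_div_iff hyy]; linear_combination hkey
  subst hz hz' hy' hδ
  rw [div_eq_div_iff hd1 hd2]
  have hyy2 : y ^ 2 - 1 ≠ 0 := by intro h; apply hyy; linear_combination h
  field_simp
  ring


/-- invariance of the invariant `f` under the second colored Markov
move, in matrix form. With `t = t_{c_n}`, `c⁺ = (c_1,…,c_n,c_n)`, `M = [[A,0],[v,1]]`,
`G^{+1}` the identity except for the last `2×2` block `[[1,t],[0,−t]]` and `G^{−1}`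
its inverse (identity except for the last `2×2` block `[[1,1],[0,−t⁻¹]]`), if `(A,v)`
satisfies the boundary relation for `c` then for every `m ∈ Λ_μ` and each
`ε ∈ {+1,−1}`: `F(c⁺, t^{−ε} m, M·G^{ε}) = F(c, m, A)` (here `n = l + 2 ≥ 2`). -/
theorem stmt6 {μ l : ℕ} (c : Fin (l+2) → Fin μ)
    (A : Matrix (Fin (l+1)) (Fin (l+1)) (Lau μ)) (v : Fin (l+1) → Lau μ)
    (hb : BoundaryRel c A v) (m : Lau μ) :
    (Fdef (Fin.snoc c (c (Fin.last (l+1))))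
        ((((tU (c (Fin.last (l+1))))⁻¹ : (Lau μ)ˣ) : Lau μ) * m)
        (aug A v *
          last2Block l 1 (tU (c (Fin.last (l+1))) : Lau μ) 0
            (-(tU (c (Fin.last (l+1))) : Lau μ)))
      = Fdef c m A)
    ∧ (Fdef (Fin.snoc c (c (Fin.last (l+1))))
        ((tU (c (Fin.last (l+1))) : Lau μ) * m)
        (aug A v *
          last2Block l 1 1 0 (-(((tU (c (Fin.last (l+1))))⁻¹ : (Lau μ)ˣ) : Lau μ)))
      = Fdef c m A) := by
  have ht' : ((tU (c (Fin.last (l+1))) : (Lau μ)ˣ) : Lau μ)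
      * (((tU (c (Fin.last (l+1))))⁻¹ : (Lau μ)ˣ) : Lau μ) = 1 :=
    Units.mul_inv _
  have hT' : ((TU c (Fin.last (l+1)) : (Lau μ)ˣ) : Lau μ)
      * (((TU c (Fin.last (l+1)))⁻¹ : (Lau μ)ˣ) : Lau μ) = 1 :=
    Units.mul_inv _
  have hTt : ((TU c ((Fin.last l).castSucc) : (Lau μ)ˣ) : Lau μ)
      * ((tU (c (Fin.last (l+1))) : (Lau μ)ˣ) : Lau μ)
      = ((TU c (Fin.last (l+1)) : (Lau μ)ˣ) : Lau μ) := by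
    rw [TU_last_eq, Units.val_mul]
  set φ := algebraMap (Lau μ) (FractionRing (Lau μ)) with hφ
  have hzzΛ : ((TU (Fin.snoc c (c (Fin.last (l+1)))) (Fin.last (l+2)) : (Lau μ)ˣ) : Lau μ)
      = ((TU c (Fin.last (l+1)) : (Lau μ)ˣ) : Lau μ)
        * ((tU (c (Fin.last (l+1))) : (Lau μ)ˣ) : Lau μ) := by
    rw [TU_snoc, Units.val_mul]
  have hzzΛ' : (((TU (Fin.snoc c (c (Fin.last (l+1)))) (Fin.last (l+2)))⁻¹ : (Lau μ)ˣ) : Lau μ)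
      = (((TU c (Fin.last (l+1)))⁻¹ : (Lau μ)ˣ) : Lau μ)
        * (((tU (c (Fin.last (l+1))))⁻¹ : (Lau μ)ˣ) : Lau μ) := by
    rw [TU_snoc, mul_inv_rev, Units.val_mul, mul_comm]
  have hx : φ ((tU (c (Fin.last (l+1))) : (Lau μ)ˣ) : Lau μ)
      * φ (((tU (c (Fin.last (l+1))))⁻¹ : (Lau μ)ˣ) : Lau μ) = 1 := by
    rw [← map_mul, ht', map_one]
  have hy : φ ((TU c (Fin.last (l+1)) : (Lau μ)ˣ) : Lau μ)
      * φ (((TU c (Fin.last (l+1)))⁻¹ : (Lau μ)ˣ) : Lau μ) = 1 := by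
    rw [← map_mul, hT', map_one]
  have hz : φ ((TU (Fin.snoc c (c (Fin.last (l+1)))) (Fin.last (l+2)) : (Lau μ)ˣ) : Lau μ)
      = φ ((TU c (Fin.last (l+1)) : (Lau μ)ˣ) : Lau μ)
        * φ ((tU (c (Fin.last (l+1))) : (Lau μ)ˣ) : Lau μ) := by
    rw [← map_mul, hzzΛ]
  have hz' : φ (((TU (Fin.snoc c (c (Fin.last (l+1)))) (Fin.last (l+2)))⁻¹ : (Lau μ)ˣ) : Lau μ)
      = φ (((TU c (Fin.last (l+1)))⁻¹ : (Lau μ)ˣ) : Lau μ)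
        * φ (((tU (c (Fin.last (l+1))))⁻¹ : (Lau μ)ˣ) : Lau μ) := by
    rw [← map_mul, hzzΛ']
  have hyy : φ ((TU c (Fin.last (l+1)) : (Lau μ)ˣ) : Lau μ)
      * φ ((TU c (Fin.last (l+1)) : (Lau μ)ˣ) : Lau μ) - 1 ≠ 0 := by
    rw [← map_mul, ← map_one φ, ← map_sub, hφ, Ne, IsFractionRing.to_map_eq_zero_iff]
    exact TU_sq_sub_one_ne c (Fin.last (l+1))
  have hd1 : φ ((TU (Fin.snoc c (c (Fin.last (l+1)))) (Fin.last (l+2)) : (Lau μ)ˣ) : Lau μ)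
      - φ (((TU (Fin.snoc c (c (Fin.last (l+1)))) (Fin.last (l+2)))⁻¹ : (Lau μ)ˣ) : Lau μ)
      ≠ 0 := by
    rw [← map_sub, hφ, Ne, IsFractionRing.to_map_eq_zero_iff]
    exact TU_sub_inv_ne _ _
  have hd2 : φ ((TU c (Fin.last (l+1)) : (Lau μ)ˣ) : Lau μ)
      - φ (((TU c (Fin.last (l+1)))⁻¹ : (Lau μ)ˣ) : Lau μ) ≠ 0 := by
    rw [← map_sub, hφ, Ne, IsFractionRing.to_map_eq_zero_iff]
    exact TU_sub_inv_ne _ _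
  constructor
  · -- positive stabilization
    have hkey := key A v c hb ((tU (c (Fin.last (l+1))) : (Lau μ)ˣ) : Lau μ)
      (-((tU (c (Fin.last (l+1))) : (Lau μ)ˣ) : Lau μ))
    have hcorner : (((TU c (Fin.last (l+1)) : (Lau μ)ˣ) : Lau μ) - 1)
          * ((-((tU (c (Fin.last (l+1))) : (Lau μ)ˣ) : Lau μ)) - 1)
        + ((tU (c (Fin.last (l+1))) : (Lau μ)ˣ) : Lau μ)
          * (((TU c ((Fin.last l).castSucc) : (Lau μ)ˣ) : Lau μ) - 1)
        = 1 - ((tU (c (Fin.last (l+1))) : (Lau μ)ˣ) : Lau μ)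
            * ((TU c (Fin.last (l+1)) : (Lau μ)ˣ) : Lau μ) := by
      linear_combination hTt
    rw [hcorner] at hkey
    have h4 := congrArg (gmap μ) hkey
    simp only [map_mul, map_sub, map_one, gmap_TU, gmap_tU] at h4
    have hQ := congrArg φ h4
    simp only [map_mul, map_sub, map_one] at hQ
    unfold Fdef
    rw [map_mul, map_mul, map_mul]
    exact final1 _ _ _ _ _ _ _ _ _ l hx hy hz hz' hyy hd1 hd2 (by linear_combination hQ)
  · -- negative stabilization
    have hkey := key A v c hb 1 (-(((tU (c (Fin.last (l+1))))⁻¹ : (Lau μ)ˣ) : Lau μ))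
    have hcorner : (((TU c (Fin.last (l+1)) : (Lau μ)ˣ) : Lau μ) - 1)
          * ((-(((tU (c (Fin.last (l+1))))⁻¹ : (Lau μ)ˣ) : Lau μ)) - 1)
        + 1 * (((TU c ((Fin.last l).castSucc) : (Lau μ)ˣ) : Lau μ) - 1)
        = (((tU (c (Fin.last (l+1))))⁻¹ : (Lau μ)ˣ) : Lau μ)
            - ((TU c (Fin.last (l+1)) : (Lau μ)ˣ) : Lau μ) := by
      linear_combination (((tU (c (Fin.last (l+1))))⁻¹ : (Lau μ)ˣ) : Lau μ) * hTt
        - ((TU c ((Fin.last l).castSucc) : (Lau μ)ˣ) : Lau μ) * ht'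
    rw [hcorner] at hkey
    have h4 := congrArg (gmap μ) hkey
    simp only [map_mul, map_sub, map_one, gmap_TU, gmap_tU_inv] at h4
    have hQ := congrArg φ h4
    simp only [map_mul, map_sub, map_one] at hQ
    unfold Fdef
    rw [map_mul, map_mul, map_mul]
    exact final2 _ _ _ _ _ _ _ _ _ l hx hy hz hz' hyy hd1 hd2 (by linear_combination hQ)
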